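/- arXiv:1805.11386 — 6 statements merged into one kernel-verified Lean document; each statement's English description precedes it below -/
import Mathlib

section
/- Let B be a d×d real symmetric positive semidefinite matrix, x ∈ R^d, and A = B + x xᵀ. Let r = rank(A) and assume r ≥ 1. Then xᵀ A† x = 1 - ∏_{k=1}^{r} λ_k(B)/λ_k(A), where A† is the Moore-Penrose pseudoinverse of A and λ_k(M) denotes the k-th largest eigenvalue of M. -/
open Matrix Finset

/-- The four Penrose conditions characterizing the Moore-Penrose pseudoinverse. -/
def IsMoorePenrose {m n : ℕ} (M : Matrix (Fin m) (Fin n) ℝ)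
    (Md : Matrix (Fin n) (Fin m) ℝ) : Prop :=
  M * Md * M = M ∧ Md * M * Md = Md ∧ (M * Md)ᵀ = M * Md ∧ (Md * M)ᵀ = Md * M

lemma mp_unique {m n : ℕ} {M : Matrix (Fin m) (Fin n) ℝ} {X Y : Matrix (Fin n) (Fin m) ℝ}
    (hX : IsMoorePenrose M X) (hY : IsMoorePenrose M Y) : X = Y := by
  obtain ⟨hX1, hX2, hX3, hX4⟩ := hX
  obtain ⟨hY1, hY2, hY3, hY4⟩ := hY
  have hMXY : M * X = M * Y := by
    calc M * X = (M * X)ᵀ := hX3.symm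
    _ = ((M * Y * M) * X)ᵀ := by rw [hY1]
    _ = (M * X)ᵀ * (M * Y)ᵀ := by
        simp only [← transpose_mul, Matrix.mul_assoc]
    _ = (M * X) * (M * Y) := by rw [hX3, hY3]
    _ = (M * X * M) * Y := by simp only [Matrix.mul_assoc]
    _ = M * Y := by rw [hX1]
  have hXYM : X * M = Y * M := by
    calc X * M = (X * M)ᵀ := hX4.symm
    _ = (X * (M * Y * M))ᵀ := by rw [hY1]
    _ = (Y * M)ᵀ * (X * M)ᵀ := by simp only [← transpose_mul, Matrix.mul_assoc]
    _ = (Y * M) * (X * M) := by rw [hX4, hY4]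
    _ = Y * (M * X * M) := by simp only [Matrix.mul_assoc]
    _ = Y * M := by rw [hX1]
  calc X = X * M * X := hX2.symm
  _ = Y * M * X := by rw [hXYM]
  _ = Y * (M * X) := by simp only [Matrix.mul_assoc]
  _ = Y * (M * Y) := by rw [hMXY]
  _ = Y * M * Y := by simp only [Matrix.mul_assoc]
  _ = Y := hY2

lemma antitone_support {d : ℕ} {f : Fin d → ℝ} (hf : Antitone f) (h0 : ∀ k, 0 ≤ f k) (k : Fin d) :
    f k ≠ 0 ↔ (k : ℕ) < (Finset.univ.filter (fun i => f i ≠ 0)).card := by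
  constructor
  · intro hk
    have hsub : Finset.Iic k ⊆ Finset.univ.filter (fun i => f i ≠ 0) := by
      intro j hj
      simp only [Finset.mem_Iic] at hj
      simp only [Finset.mem_filter, Finset.mem_univ, true_and]
      have hle : f k ≤ f j := hf hj
      have hk' : 0 < f k := lt_of_le_of_ne (h0 k) (Ne.symm hk)
      exact (lt_of_lt_of_le hk' hle).ne'
    have := Finset.card_le_card hsub
    rw [Fin.card_Iic] at this
    omega
  · intro hk
    by_contra h
    have hsub : Finset.univ.filter (fun i => f i ≠ 0) ⊆ Finset.Iio k := by
      intro j hj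
      simp only [Finset.mem_filter, Finset.mem_univ, true_and] at hj
      simp only [Finset.mem_Iio]
      by_contra hjk
      push_neg at hjk
      have : f j ≤ f k := hf hjk
      rw [h] at this
      exact hj (le_antisymm this (h0 j))
    have := Finset.card_le_card hsub
    rw [Fin.card_Iio] at this
    omega

lemma mp_diag {d : ℕ} {W : Matrix (Fin d) (Fin d) ℝ} (h1 : Wᵀ * W = 1) (h2 : W * Wᵀ = 1)
    (μ : Fin d → ℝ) :
    IsMoorePenrose (W * diagonal μ * Wᵀ) (W * diagonal (fun k => if μ k = 0 then 0 else (μ k)⁻¹) * Wᵀ) := by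
  set g : Fin d → ℝ := fun k => if μ k = 0 then 0 else (μ k)⁻¹ with hg
  have key : ∀ u v : Fin d → ℝ, (W * diagonal u * Wᵀ) * (W * diagonal v * Wᵀ)
      = W * diagonal (u * v) * Wᵀ := by
    intro u v
    have h1' : ∀ Z : Matrix (Fin d) (Fin d) ℝ, Wᵀ * (W * Z) = Z := by
      intro Z; rw [← Matrix.mul_assoc, h1, Matrix.one_mul]
    simp only [Matrix.mul_assoc, h1']
    rw [← Matrix.mul_assoc (diagonal u), diagonal_mul_diagonal]; rfl
  have tkey : ∀ u : Fin d → ℝ, (W * diagonal u * Wᵀ)ᵀ = W * diagonal u * Wᵀ := by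
    intro u
    rw [transpose_mul, transpose_mul, transpose_transpose, diagonal_transpose, Matrix.mul_assoc]
  have hgm : μ * g * μ = μ := by
    funext k
    simp only [Pi.mul_apply, hg]
    by_cases h : μ k = 0 <;> simp [h]
  have hmg : g * μ * g = g := by
    funext k
    simp only [Pi.mul_apply, hg]
    by_cases h : μ k = 0 <;> simp [h]
  refine ⟨?_, ?_, ?_, ?_⟩
  · rw [key, key, hgm]
  · rw [key, key, hmg]
  · rw [key, tkey]
  · rw [key, tkey]

lemma spectral_perm {d : ℕ} {A : Matrix (Fin d) (Fin d) ℝ} (hAh : A.IsHermitian)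
    (σ : Equiv.Perm (Fin d)) :
    ∃ W : Matrix (Fin d) (Fin d) ℝ, Wᵀ * W = 1 ∧ W * Wᵀ = 1 ∧
      A = W * diagonal (hAh.eigenvalues ∘ σ) * Wᵀ := by
  set U : Matrix (Fin d) (Fin d) ℝ := (hAh.eigenvectorUnitary : Matrix (Fin d) (Fin d) ℝ) with hU
  have hU1 : Uᵀ * U = 1 := by
    have := (Matrix.mem_unitaryGroup_iff').mp hAh.eigenvectorUnitary.2
    rwa [star_eq_conjTranspose, conjTranspose_eq_transpose_of_trivial] at this
  have hU2 : U * Uᵀ = 1 := by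
    have := (Matrix.mem_unitaryGroup_iff).mp hAh.eigenvectorUnitary.2
    rwa [star_eq_conjTranspose, conjTranspose_eq_transpose_of_trivial] at this
  have hspec : A = U * diagonal hAh.eigenvalues * Uᵀ := by
    have := hAh.spectral_theorem
    rwa [Unitary.conjStarAlgAut_apply, star_eq_conjTranspose, conjTranspose_eq_transpose_of_trivial,
      RCLike.ofReal_real_eq_id, Function.id_comp] at this
  refine ⟨U.submatrix id σ, ?_, ?_, ?_⟩
  · ext k l
    have := congrFun (congrFun hU1 (σ k)) (σ l)
    simp only [Matrix.mul_apply, Matrix.transpose_apply, Matrix.submatrix_apply, id_eq]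
    rw [show ∑ i, U i (σ k) * U i (σ l) = (Uᵀ * U) (σ k) (σ l) by simp [Matrix.mul_apply], hU1]
    simp [Matrix.one_apply]
  · ext i j
    simp only [Matrix.mul_apply, Matrix.transpose_apply, Matrix.submatrix_apply, id_eq]
    rw [Fintype.sum_equiv σ _ (fun m => U i m * U j m) (fun k => rfl)]
    rw [show ∑ m, U i m * U j m = (U * Uᵀ) i j by simp [Matrix.mul_apply], hU2]
  · conv_lhs => rw [hspec]
    ext i j
    rw [Matrix.mul_apply, Matrix.mul_apply]
    simp only [Matrix.mul_diagonal, Matrix.transpose_apply, Matrix.submatrix_apply, id_eq,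
      Function.comp_apply]
    exact (Fintype.sum_equiv σ _ (fun m => U i m * hAh.eigenvalues m * U j m) (fun k => rfl)).symm

lemma filter_eq_map {d r : ℕ} (hrd : r ≤ d) :
    (Finset.univ.filter fun k : Fin d => (k : ℕ) < r) = Finset.univ.map (Fin.castLEEmb hrd) := by
  ext k
  simp only [Finset.mem_filter, Finset.mem_univ, true_and, Finset.mem_map, Fin.castLEEmb,
    Function.Embedding.coeFn_mk]
  constructor
  · intro hk
    refine ⟨⟨(k : ℕ), hk⟩, ?_⟩
    apply Fin.ext
    simp
  · rintro ⟨i, -, rfl⟩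
    simpa using i.2

lemma prod_filter_lt {d r : ℕ} (hrd : r ≤ d) (f : Fin d → ℝ) :
    ∏ k ∈ Finset.univ.filter (fun k : Fin d => (k : ℕ) < r), f k
      = ∏ i : Fin r, f (Fin.castLE hrd i) := by
  rw [filter_eq_map hrd, Finset.prod_map]; rfl

lemma sum_filter_lt {d r : ℕ} (hrd : r ≤ d) (f : Fin d → ℝ) :
    ∑ k ∈ Finset.univ.filter (fun k : Fin d => (k : ℕ) < r), f k
      = ∑ i : Fin r, f (Fin.castLE hrd i) := by
  rw [filter_eq_map hrd, Finset.sum_map]; rfl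

lemma card_filter_lt {d r : ℕ} (hrd : r ≤ d) :
    (Finset.univ.filter fun k : Fin d => (k : ℕ) < r).card = r := by
  rw [filter_eq_map hrd, Finset.card_map, Finset.card_univ, Fintype.card_fin]

lemma det_diag_sub_rank_one {r : ℕ} (μ u : Fin r → ℝ) (hμ : ∀ i, μ i ≠ 0) :
    det (diagonal μ - vecMulVec u u) = (∏ i, μ i) * (1 - ∑ i, u i ^ 2 / μ i) := by
  have hdet : IsUnit (diagonal μ).det := by
    rw [det_diagonal]
    exact (Finset.prod_ne_zero_iff.mpr fun i _ => hμ i).isUnit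
  have h1 : diagonal μ - vecMulVec u u = diagonal μ + replicateCol Unit (-u) * replicateRow Unit u := by
    rw [vecMulVec_eq Unit]
    ext i j
    simp [Matrix.mul_apply, Matrix.replicateCol, Matrix.replicateRow, sub_eq_add_neg]
  rw [h1, det_add_replicateCol_mul_replicateRow hdet]
  rw [det_diagonal]
  congr 1
  rw [det_unique]
  have hinv : (diagonal μ)⁻¹ = diagonal (fun i => (μ i)⁻¹) := by
    apply Matrix.inv_eq_right_inv
    rw [diagonal_mul_diagonal]
    convert Matrix.diagonal_one using 2
    funext i
    exact mul_inv_cancel₀ (hμ i)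
  have hx : ∀ x : Fin r, u x * (μ x)⁻¹ * (-u x) = -(u x ^ 2 / μ x) := fun x => by ring
  simp only [hinv, Matrix.add_apply, Matrix.one_apply_eq, Matrix.mul_apply,
    Matrix.diagonal_apply, Matrix.replicateRow_apply, Matrix.replicateCol_apply, mul_ite, mul_zero,
    Finset.sum_ite_eq', Finset.mem_univ, if_true, Pi.neg_apply, hx,
    Finset.sum_neg_distrib, sub_eq_add_neg]
lemma det_conj_sub {d : ℕ} {W M : Matrix (Fin d) (Fin d) ℝ} (h1 : Wᵀ * W = 1)
    (h2 : W * Wᵀ = 1) (t : ℝ) :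
    det (t • (1 : Matrix (Fin d) (Fin d) ℝ) - W * M * Wᵀ)
      = det (t • (1 : Matrix (Fin d) (Fin d) ℝ) - M) := by
  have hconj : t • (1 : Matrix (Fin d) (Fin d) ℝ) - W * M * Wᵀ
      = W * (t • (1 : Matrix (Fin d) (Fin d) ℝ) - M) * Wᵀ := by
    rw [Matrix.mul_sub, Matrix.sub_mul]
    congr 1
    rw [Matrix.mul_smul, Matrix.mul_one, Matrix.smul_mul, h2]
  rw [hconj, det_mul, det_mul, mul_right_comm, ← det_mul, h2, det_one, one_mul]

/-- For `B` symmetric PSD, `A = B + x xᵀ` of rank `r ≥ 1`, one has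
`xᵀ A† x = 1 - ∏_{k=1}^r λ_k(B)/λ_k(A)` where `λ_k` are the eigenvalues in
non-increasing order. -/
theorem stmt2 {d : ℕ} (B : Matrix (Fin d) (Fin d) ℝ) (hB : B.PosSemidef)
    (x : Fin d → ℝ) (A : Matrix (Fin d) (Fin d) ℝ)
    (hA : A = B + Matrix.vecMulVec x x) (hAh : A.IsHermitian)
    (Adag : Matrix (Fin d) (Fin d) ℝ) (hdag : IsMoorePenrose A Adag)
    (μA μB : Fin d → ℝ) (hμA : Antitone μA) (hμB : Antitone μB)
    (hpermA : ∃ σ : Equiv.Perm (Fin d), μA = hAh.eigenvalues ∘ σ)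
    (hpermB : ∃ σ : Equiv.Perm (Fin d), μB = hB.1.eigenvalues ∘ σ)
    (r : ℕ) (hr : r = A.rank) (hr1 : 1 ≤ r) :
    x ⬝ᵥ (Adag *ᵥ x) =
      1 - ∏ k ∈ Finset.univ.filter (fun k : Fin d => (k : ℕ) < r), (μB k / μA k) := by
  obtain ⟨σ, hσ⟩ := hpermA
  obtain ⟨W, hW1, hW2, hWA⟩ := spectral_perm hAh σ
  rw [show diagonal (hAh.eigenvalues ∘ σ) = diagonal μA by rw [hσ]] at hWA
  -- A is PSD
  have hxx : (Matrix.vecMulVec x x).PosSemidef := by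
    rw [Matrix.posSemidef_iff_dotProduct_mulVec]
    constructor
    · rw [Matrix.IsHermitian, conjTranspose_eq_transpose_of_trivial]
      ext i j
      simp [Matrix.vecMulVec_apply, mul_comm]
    · intro v
      have hmv : Matrix.vecMulVec x x *ᵥ v = (x ⬝ᵥ v) • x := by
        ext i
        simp [Matrix.vecMulVec_apply, Matrix.mulVec, dotProduct, Finset.mul_sum, mul_comm,
          mul_left_comm]
      rw [hmv]
      have : star v ⬝ᵥ ((x ⬝ᵥ v) • x) = (x ⬝ᵥ v) * (v ⬝ᵥ x) := by
        simp [dotProduct, Finset.mul_sum, mul_comm, mul_left_comm]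
      rw [this, dotProduct_comm]
      exact mul_self_nonneg _
  have hApsd : A.PosSemidef := hA ▸ hB.add hxx
  have hμA0 : ∀ k, 0 ≤ μA k := fun k => by rw [hσ]; exact hApsd.eigenvalues_nonneg _
  have hcardA : (Finset.univ.filter fun k : Fin d => μA k ≠ 0).card = r := by
    rw [← Fintype.card_subtype]
    have hequiv : {k : Fin d // μA k ≠ 0} ≃ {i : Fin d // hAh.eigenvalues i ≠ 0} :=
      σ.subtypeEquiv (fun k => by rw [hσ]; exact Iff.rfl)
    rw [Fintype.card_congr hequiv, hr, hAh.rank_eq_card_non_zero_eigs]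
  have hchar : ∀ k : Fin d, μA k ≠ 0 ↔ (k : ℕ) < r := fun k => by
    rw [← hcardA]; exact antitone_support hμA hμA0 k
  have hrd : r ≤ d := by
    rw [hr]
    simpa using A.rank_le_card_width
  set emb : Fin r → Fin d := Fin.castLE hrd with hembdef
  have hembval : ∀ i : Fin r, ((emb i : Fin d) : ℕ) = (i : ℕ) := fun i => rfl
  -- pseudoinverse
  set g : Fin d → ℝ := fun k => if μA k = 0 then 0 else (μA k)⁻¹ with hgdef
  have hP : IsMoorePenrose A (W * diagonal g * Wᵀ) := by
    have := mp_diag hW1 hW2 μA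
    rwa [← hWA] at this
  have hAdag : Adag = W * diagonal g * Wᵀ := mp_unique hdag hP
  set y : Fin d → ℝ := Wᵀ *ᵥ x with hydef
  have hLHS : x ⬝ᵥ (Adag *ᵥ x) = ∑ k, g k * y k ^ 2 := by
    rw [hAdag, ← mulVec_mulVec, ← mulVec_mulVec, dotProduct_mulVec, ← mulVec_transpose, ← hydef]
    simp only [dotProduct, Matrix.mulVec_diagonal]
    exact Finset.sum_congr rfl fun k _ => by ring
  -- the matrix C
  set C : Matrix (Fin d) (Fin d) ℝ := diagonal μA - vecMulVec y y with hCdef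
  have hWy : W *ᵥ y = x := by
    rw [hydef, mulVec_mulVec, hW2, one_mulVec]
  have hvmv : W * vecMulVec y y * Wᵀ = vecMulVec x x := by
    rw [vecMulVec_eq Unit, vecMulVec_eq Unit, ← Matrix.mul_assoc, Matrix.mul_assoc _ _ Wᵀ,
      ← Matrix.replicateCol_mulVec, hWy, show Matrix.replicateRow Unit y * Wᵀ = Matrix.replicateRow Unit (y ᵥ* Wᵀ) from
        (Matrix.replicateRow_vecMul Wᵀ y).symm, vecMul_transpose, hWy]
  have hWC : B = W * C * Wᵀ := by
    rw [hCdef, Matrix.mul_sub, Matrix.sub_mul, hvmv, ← hWA, hA]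
    simp
  have hCB : C = Wᵀ * B * W := by
    rw [hWC]
    simp only [← Matrix.mul_assoc]
    rw [hW1, Matrix.one_mul, Matrix.mul_assoc, hW1, Matrix.mul_one]
  have hCpsd : C.PosSemidef := by
    rw [hCB, show Wᵀ = Wᴴ by rw [conjTranspose_eq_transpose_of_trivial]]
    exact hB.conjTranspose_mul_mul_same W
  have hy0 : ∀ k : Fin d, r ≤ (k : ℕ) → y k = 0 := by
    intro k hk
    have hdiag : 0 ≤ C k k := by
      have := hCpsd.dotProduct_mulVec_nonneg (Pi.single k 1)
      simpa [dotProduct, Matrix.mulVec, Pi.single_apply, Finset.sum_ite_eq,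
        Finset.sum_ite_eq'] using this
    have hμ0 : μA k = 0 := by
      by_contra h
      exact absurd ((hchar k).mp h) (by omega)
    have hCkk : C k k = -(y k * y k) := by
      simp [hCdef, Matrix.vecMulVec_apply, hμ0]
    rw [hCkk] at hdiag
    nlinarith [mul_self_nonneg (y k)]
  have hμA00 : ∀ k : Fin d, r ≤ (k : ℕ) → μA k = 0 := by
    intro k hk
    by_contra h
    exact absurd ((hchar k).mp h) (by omega)
  have hC0 : ∀ i j : Fin d, r ≤ (i : ℕ) ∨ r ≤ (j : ℕ) → C i j = 0 := by
    intro i j hij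
    have hCij : C i j = diagonal μA i j - y i * y j := by
      simp [hCdef, Matrix.vecMulVec_apply]
    rcases hij with h | h
    · rw [hCij, hy0 i h, zero_mul, sub_zero]
      rcases eq_or_ne i j with rfl | hne
      · rw [diagonal_apply_eq, hμA00 i h]
      · rw [diagonal_apply_ne _ hne]
    · rw [hCij, hy0 j h, mul_zero, sub_zero]
      rcases eq_or_ne i j with rfl | hne
      · rw [diagonal_apply_eq, hμA00 i h]
      · rw [diagonal_apply_ne _ hne]
  set Cr : Matrix (Fin r) (Fin r) ℝ := C.submatrix emb emb with hCrdef
  -- determinant identities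
  have hdetC : ∀ t : ℝ, det (t • (1 : Matrix (Fin d) (Fin d) ℝ) - C)
      = t ^ (d - r) * det (t • (1 : Matrix (Fin r) (Fin r) ℝ) - Cr) := by
    intro t
    set e' : Fin r ⊕ Fin (d - r) ≃ Fin d := finSumFinEquiv.trans (finCongr (by omega)) with he'
    have hinl : ∀ i : Fin r, e' (Sum.inl i) = emb i := by
      intro i
      apply Fin.ext
      simp [he', hembdef]
    have hinrval : ∀ j : Fin (d - r), ((e' (Sum.inr j) : Fin d) : ℕ) = r + (j : ℕ) := by
      intro j
      simp [he']
    have hembinj : Function.Injective emb := Fin.castLE_injective hrd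
    have hblock : (t • (1 : Matrix (Fin d) (Fin d) ℝ) - C).submatrix e' e'
        = fromBlocks (t • (1 : Matrix (Fin r) (Fin r) ℝ) - Cr) 0 0
            (t • (1 : Matrix (Fin (d - r)) (Fin (d - r)) ℝ)) := by
      ext i j
      cases i with
      | inl i =>
        cases j with
        | inl j =>
          rw [Matrix.submatrix_apply, hinl i, hinl j, Matrix.fromBlocks_apply₁₁]
          simp [Matrix.one_apply, hembinj.eq_iff, hCrdef]
        | inr j =>
          rw [Matrix.submatrix_apply, hinl i, Matrix.fromBlocks_apply₁₂]
          have hne : emb i ≠ e' (Sum.inr j) := by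
            intro h
            have := congrArg (fun z : Fin d => (z : ℕ)) h
            simp only [hembval, hinrval] at this
            omega
          have hC : C (emb i) (e' (Sum.inr j)) = 0 :=
            hC0 _ _ (Or.inr (by rw [hinrval]; omega))
          simp [Matrix.one_apply_ne hne, hC]
      | inr i =>
        cases j with
        | inl j =>
          rw [Matrix.submatrix_apply, hinl j, Matrix.fromBlocks_apply₂₁]
          have hne : e' (Sum.inr i) ≠ emb j := by
            intro h
            have := congrArg (fun z : Fin d => (z : ℕ)) h
            simp only [hembval, hinrval] at this
            omega
          have hC : C (e' (Sum.inr i)) (emb j) = 0 :=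
            hC0 _ _ (Or.inl (by rw [hinrval]; omega))
          simp [Matrix.one_apply_ne hne, hC]
        | inr j =>
          rw [Matrix.submatrix_apply, Matrix.fromBlocks_apply₂₂]
          have hC : C (e' (Sum.inr i)) (e' (Sum.inr j)) = 0 :=
            hC0 _ _ (Or.inl (by rw [hinrval]; omega))
          have hiff : e' (Sum.inr i) = e' (Sum.inr j) ↔ i = j := by
            constructor
            · intro h
              exact Sum.inr.inj (e'.injective h)
            · rintro rfl; rfl
          simp [Matrix.one_apply, hC, hiff]
    rw [← det_submatrix_equiv_self e' (t • (1 : Matrix (Fin d) (Fin d) ℝ) - C), hblock,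
      det_fromBlocks_zero₂₁, det_smul, det_one, Fintype.card_fin, mul_one, mul_comm]
  have hdetBC : ∀ t : ℝ, det (t • (1 : Matrix (Fin d) (Fin d) ℝ) - B)
      = det (t • (1 : Matrix (Fin d) (Fin d) ℝ) - C) := by
    intro t
    rw [hWC]
    exact det_conj_sub hW1 hW2 t
  have hdetB : ∀ t : ℝ, det (t • (1 : Matrix (Fin d) (Fin d) ℝ) - B)
      = ∏ k, (t - μB k) := by
    intro t
    obtain ⟨σB, hσB⟩ := hpermB
    obtain ⟨V, hV1, hV2, hVB⟩ := spectral_perm hB.1 σB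
    rw [show diagonal (hB.1.eigenvalues ∘ σB) = diagonal μB by rw [hσB]] at hVB
    rw [hVB, det_conj_sub hV1 hV2 t]
    rw [show t • (1 : Matrix (Fin d) (Fin d) ℝ) - diagonal μB
        = diagonal (fun k => t - μB k) from by
      ext i j
      rcases eq_or_ne i j with rfl | hne
      · simp
      · simp [Matrix.one_apply_ne hne, diagonal_apply_ne _ hne]]
    rw [det_diagonal]
  -- μB vanishing
  have hμB0 : ∀ k, 0 ≤ μB k := by
    obtain ⟨σB, hσB⟩ := hpermB
    intro k
    rw [hσB]
    exact hB.eigenvalues_nonneg _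
  have hμBr : ∀ k : Fin d, r ≤ (k : ℕ) → μB k = 0 := by
    have hrankC : C.rank ≤ r := by
      set χ : Fin d → ℝ := fun k => if (k : ℕ) < r then (1 : ℝ) else 0 with hχ
      have hCχ : C = C * diagonal χ := by
        ext i j
        rw [Matrix.mul_diagonal]
        by_cases hj : (j : ℕ) < r
        · simp [hχ, hj]
        · rw [hC0 i j (Or.inr (by omega))]
          simp
      calc C.rank = (C * diagonal χ).rank := by rw [← hCχ]
      _ ≤ (diagonal χ).rank := Matrix.rank_mul_le_right _ _
      _ = Fintype.card {i : Fin d // χ i ≠ 0} := Matrix.rank_diagonal χ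
      _ = (Finset.univ.filter fun k : Fin d => χ k ≠ 0).card := Fintype.card_subtype _
      _ = (Finset.univ.filter fun k : Fin d => (k : ℕ) < r).card := by
          congr 1
          apply Finset.filter_congr
          intro k _
          by_cases hk : (k : ℕ) < r <;> simp [hχ, hk]
      _ = r := card_filter_lt hrd
    have hrankB : B.rank ≤ r := by
      calc B.rank = (W * (C * Wᵀ)).rank := by rw [← Matrix.mul_assoc, ← hWC]
      _ ≤ (C * Wᵀ).rank := Matrix.rank_mul_le_right _ _
      _ ≤ C.rank := Matrix.rank_mul_le_left _ _
      _ ≤ r := hrankC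
    have hcardB : (Finset.univ.filter fun k : Fin d => μB k ≠ 0).card ≤ r := by
      obtain ⟨σB, hσB⟩ := hpermB
      rw [← Fintype.card_subtype]
      have hequiv : {k : Fin d // μB k ≠ 0} ≃ {i : Fin d // hB.1.eigenvalues i ≠ 0} :=
        σB.subtypeEquiv (fun k => by rw [hσB]; exact Iff.rfl)
      rw [Fintype.card_congr hequiv, ← hB.1.rank_eq_card_non_zero_eigs]
      exact hrankB
    intro k hk
    by_contra h
    have := (antitone_support hμB hμB0 k).mp h
    omega
  -- product over the top block
  have hprodB : ∏ k ∈ Finset.univ.filter (fun k : Fin d => (k : ℕ) < r), μB k = det Cr := by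
    have hsplit : ∀ t : ℝ, ∏ k, (t - μB k)
        = t ^ (d - r) * ∏ k ∈ Finset.univ.filter (fun k : Fin d => (k : ℕ) < r), (t - μB k) := by
      intro t
      rw [← Finset.prod_filter_mul_prod_filter_not Finset.univ (fun k : Fin d => (k : ℕ) < r)]
      have hnot : ∏ k ∈ Finset.univ.filter (fun k : Fin d => ¬ (k : ℕ) < r), (t - μB k)
          = t ^ (d - r) := by
        rw [Finset.prod_congr rfl (fun k hk => by
          simp only [Finset.mem_filter] at hk
          rw [hμBr k (by omega), sub_zero])]
        rw [Finset.prod_const]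
        congr 1
        have hadd := Finset.card_filter_add_card_filter_not
          (s := (Finset.univ : Finset (Fin d))) (p := fun k : Fin d => (k : ℕ) < r)
        rw [card_filter_lt hrd, Finset.card_univ, Fintype.card_fin] at hadd
        omega
      rw [hnot, mul_comm]
    have hkey : ∀ t : ℝ, t ≠ 0 →
        ∏ k ∈ Finset.univ.filter (fun k : Fin d => (k : ℕ) < r), (t - μB k)
          = det (t • (1 : Matrix (Fin r) (Fin r) ℝ) - Cr) := by
      intro t ht
      have h1 : t ^ (d - r) * ∏ k ∈ Finset.univ.filter (fun k : Fin d => (k : ℕ) < r), (t - μB k)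
          = t ^ (d - r) * det (t • (1 : Matrix (Fin r) (Fin r) ℝ) - Cr) := by
        rw [← hsplit t, ← hdetB t, hdetBC t, hdetC t]
      exact mul_left_cancel₀ (pow_ne_zero _ ht) h1
    set p1 : Polynomial ℝ := ∏ k ∈ Finset.univ.filter (fun k : Fin d => (k : ℕ) < r),
      (Polynomial.X - Polynomial.C (μB k)) with hp1
    set M2 : Matrix (Fin r) (Fin r) (Polynomial ℝ) :=
      (Polynomial.X : Polynomial ℝ) • (1 : Matrix (Fin r) (Fin r) (Polynomial ℝ))
        - Cr.map Polynomial.C with hM2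
    have he1 : ∀ t : ℝ, p1.eval t
        = ∏ k ∈ Finset.univ.filter (fun k : Fin d => (k : ℕ) < r), (t - μB k) := by
      intro t
      simp [hp1, Polynomial.eval_prod]
    have he2 : ∀ t : ℝ, (M2.det).eval t = det (t • (1 : Matrix (Fin r) (Fin r) ℝ) - Cr) := by
      intro t
      have h := RingHom.map_det (Polynomial.evalRingHom t) M2
      rw [RingHom.mapMatrix_apply] at h
      have hmap : M2.map (Polynomial.evalRingHom t) = t • (1 : Matrix (Fin r) (Fin r) ℝ) - Cr := by
        ext i j
        rcases eq_or_ne i j with rfl | hne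
        · simp [hM2]
        · simp [hM2, Matrix.one_apply_ne hne]
      rw [hmap] at h
      exact h
    have hpoly : p1 = M2.det := by
      have hroot : {t : ℝ | t ≠ 0} ⊆ {t : ℝ | (p1 - M2.det).IsRoot t} := by
        intro t ht
        simp only [Set.mem_setOf_eq, Polynomial.IsRoot, Polynomial.eval_sub]
        rw [he1, he2, hkey t ht, sub_self]
      have hinf0 : {t : ℝ | t ≠ 0}.Infinite := by
        rw [show {t : ℝ | t ≠ 0} = ({0} : Set ℝ)ᶜ from (Set.compl_singleton_eq (0:ℝ)).symm]
        exact (Set.finite_singleton (0:ℝ)).infinite_compl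
      have hinf : {t : ℝ | (p1 - M2.det).IsRoot t}.Infinite := hinf0.mono hroot
      have hz := Polynomial.eq_zero_of_infinite_isRoot _ hinf
      exact sub_eq_zero.mp hz
    have h0 : p1.eval 0 = (M2.det).eval 0 := by rw [hpoly]
    rw [he1 0, he2 0] at h0
    have hL : ∏ k ∈ Finset.univ.filter (fun k : Fin d => (k : ℕ) < r), ((0:ℝ) - μB k)
        = (-1 : ℝ) ^ r * ∏ k ∈ Finset.univ.filter (fun k : Fin d => (k : ℕ) < r), μB k := by
      rw [Finset.prod_congr rfl (fun k _ => show (0:ℝ) - μB k = -1 * μB k by ring),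
        Finset.prod_mul_distrib, Finset.prod_const, card_filter_lt hrd]
    have hR : det ((0:ℝ) • (1 : Matrix (Fin r) (Fin r) ℝ) - Cr) = (-1 : ℝ) ^ r * det Cr := by
      rw [zero_smul, zero_sub, det_neg, Fintype.card_fin]
    rw [hL, hR] at h0
    exact mul_left_cancel₀ (pow_ne_zero r (by norm_num : (-1:ℝ) ≠ 0)) h0
  -- Cr as diagonal minus rank one
  have hCr : Cr = diagonal (fun i => μA (emb i)) - vecMulVec (fun i => y (emb i)) (fun i => y (emb i)) := by
    ext i j
    simp only [hCrdef, hCdef, Matrix.submatrix_apply, Matrix.sub_apply, Matrix.vecMulVec_apply]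
    congr 1
    rcases eq_or_ne i j with rfl | hne
    · simp
    · have hne' : emb i ≠ emb j := fun h => hne (by
        apply Fin.ext
        have := congrArg (fun z : Fin d => (z : ℕ)) h
        simpa [hembval] using this)
      rw [diagonal_apply_ne _ hne', diagonal_apply_ne _ hne]
  have hμAemb : ∀ i : Fin r, μA (emb i) ≠ 0 := fun i => (hchar (emb i)).mpr (by rw [hembval]; exact i.2)
  have hdetCr : det Cr = (∏ i, μA (emb i)) * (1 - ∑ i, y (emb i) ^ 2 / μA (emb i)) := by
    rw [hCr]; exact det_diag_sub_rank_one _ _ hμAemb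
  -- final computation
  have hPA : (∏ i, μA (emb i)) ≠ 0 := Finset.prod_ne_zero_iff.mpr fun i _ => hμAemb i
  have hprodA : ∏ k ∈ Finset.univ.filter (fun k : Fin d => (k : ℕ) < r), μA k = ∏ i, μA (emb i) :=
    prod_filter_lt hrd μA
  have hRHS : ∏ k ∈ Finset.univ.filter (fun k : Fin d => (k : ℕ) < r), (μB k / μA k)
      = 1 - ∑ i, y (emb i) ^ 2 / μA (emb i) := by
    rw [Finset.prod_div_distrib, hprodB, hdetCr, hprodA]
    field_simp
  rw [hLHS, hRHS]
  have hgsum : ∑ k, g k * y k ^ 2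
      = ∑ k ∈ Finset.univ.filter (fun k : Fin d => (k : ℕ) < r), (μA k)⁻¹ * y k ^ 2 := by
    rw [← Finset.sum_filter_add_sum_filter_not Finset.univ (fun k : Fin d => (k : ℕ) < r)]
    have h2 : ∑ k ∈ Finset.univ.filter (fun k : Fin d => ¬ (k : ℕ) < r), g k * y k ^ 2 = 0 := by
      apply Finset.sum_eq_zero
      intro k hk
      simp only [Finset.mem_filter] at hk
      have : μA k = 0 := hμA00 k (by omega)
      simp [hgdef, this]
    rw [h2, add_zero]
    apply Finset.sum_congr rfl
    intro k hk
    simp only [Finset.mem_filter] at hk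
    have : μA k ≠ 0 := (hchar k).mpr hk.2
    simp [hgdef, this]
  rw [hgsum, sum_filter_lt hrd]
  rw [show ∀ z : ℝ, 1 - (1 - z) = z from fun z => by ring]
  exact Finset.sum_congr rfl fun i _ => by rw [div_eq_inv_mul]
end

section
/- Let M be an m×n real matrix and N an n×p real matrix. If Mᵀ M = I_n or N Nᵀ = I_n, then (M N)† = N† M†. -/
open Matrix

lemma mp_unique_s7 {a b : ℕ} {A : Matrix (Fin a) (Fin b) ℝ}
    {B C : Matrix (Fin b) (Fin a) ℝ}
    (hB : IsMoorePenrose A B) (hC : IsMoorePenrose A C) : B = C := by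
  obtain ⟨hB1, hB2, hB3, hB4⟩ := hB
  obtain ⟨hC1, hC2, hC3, hC4⟩ := hC
  have hab : A * B = A * C := by
    calc A * B = (A * B)ᵀ := hB3.symm
    _ = Bᵀ * Aᵀ := by rw [transpose_mul]
    _ = Bᵀ * (A * C * A)ᵀ := by rw [hC1]
    _ = Bᵀ * (Aᵀ * (A * C)ᵀ) := by rw [transpose_mul]
    _ = (A * B)ᵀ * (A * C)ᵀ := by simp only [transpose_mul, Matrix.mul_assoc]
    _ = A * B * (A * C) := by rw [hB3, hC3]
    _ = A * C := by rw [show A * B * (A * C) = (A * B * A) * C by simp only [Matrix.mul_assoc], hB1]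
  have hba : B * A = C * A := by
    calc B * A = (B * A)ᵀ := hB4.symm
    _ = Aᵀ * Bᵀ := by rw [transpose_mul]
    _ = (A * C * A)ᵀ * Bᵀ := by rw [hC1]
    _ = (C * A)ᵀ * Aᵀ * Bᵀ := by simp only [transpose_mul, Matrix.mul_assoc]
    _ = (C * A)ᵀ * (B * A)ᵀ := by simp only [transpose_mul, Matrix.mul_assoc]
    _ = C * A * (B * A) := by rw [hB4, hC4]
    _ = C * (A * B * A) := by simp only [Matrix.mul_assoc]
    _ = C * A := by rw [hB1]
  calc B = B * A * B := hB2.symm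
  _ = C * A * B := by rw [hba]
  _ = C * (A * B) := by rw [Matrix.mul_assoc]
  _ = C * (A * C) := by rw [hab]
  _ = C * A * C := by rw [Matrix.mul_assoc]
  _ = C := hC2

/-- If `Mᵀ M = I_n` or `N Nᵀ = I_n`, then `(M N)† = N† M†`. -/
theorem stmt7 {m n p : ℕ} (M : Matrix (Fin m) (Fin n) ℝ) (N : Matrix (Fin n) (Fin p) ℝ)
    (h : Mᵀ * M = 1 ∨ N * Nᵀ = 1)
    (Md : Matrix (Fin n) (Fin m) ℝ) (hMd : IsMoorePenrose M Md)
    (Nd : Matrix (Fin p) (Fin n) ℝ) (hNd : IsMoorePenrose N Nd)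
    (P : Matrix (Fin p) (Fin m) ℝ) (hP : IsMoorePenrose (M * N) P) :
    P = Nd * Md := by
  obtain ⟨hN1, hN2, hN3, hN4⟩ := hNd
  obtain ⟨hM1, hM2, hM3, hM4⟩ := hMd
  apply mp_unique_s7 hP
  rcases h with h | h
  · -- Mᵀ M = 1, so Md = Mᵀ
    have hMdT : Md = Mᵀ := by
      apply mp_unique_s7 ⟨hM1, hM2, hM3, hM4⟩
      refine ⟨?_, ?_, ?_, ?_⟩
      · rw [Matrix.mul_assoc, h, Matrix.mul_one]
      · rw [Matrix.mul_assoc, ← Matrix.mul_assoc Mᵀ M Mᵀ, h, Matrix.one_mul]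
      · rw [transpose_mul, transpose_transpose]
      · rw [h, transpose_one]
    subst hMdT
    have hMM : Mᵀ * M = 1 := h
    refine ⟨?_, ?_, ?_, ?_⟩
    · calc M * N * (Nd * Mᵀ) * (M * N)
          = M * (N * Nd) * (Mᵀ * M) * N := by
            simp only [Matrix.mul_assoc]
        _ = M * (N * Nd * N) := by rw [hMM, Matrix.mul_one]; simp only [Matrix.mul_assoc]
        _ = M * N := by rw [hN1]
    · calc Nd * Mᵀ * (M * N) * (Nd * Mᵀ)
          = Nd * (Mᵀ * M) * (N * Nd) * Mᵀ := by simp only [Matrix.mul_assoc]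
        _ = Nd * N * Nd * Mᵀ := by rw [hMM, Matrix.mul_one]; simp only [Matrix.mul_assoc]
        _ = Nd * Mᵀ := by rw [hN2]
    · have : M * N * (Nd * Mᵀ) = M * (N * Nd) * Mᵀ := by simp only [Matrix.mul_assoc]
      rw [this, transpose_mul, transpose_mul, transpose_transpose, hN3]
      simp only [Matrix.mul_assoc]
    · have : Nd * Mᵀ * (M * N) = Nd * ((Mᵀ * M) * N) := by simp only [Matrix.mul_assoc]
      rw [this, hMM, Matrix.one_mul, hN4]
  · -- N Nᵀ = 1, so Nd = Nᵀ
    have hNdT : Nd = Nᵀ := by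
      apply mp_unique_s7 ⟨hN1, hN2, hN3, hN4⟩
      refine ⟨?_, ?_, ?_, ?_⟩
      · rw [Matrix.mul_assoc, ← Matrix.mul_assoc N Nᵀ N]; rw [h, Matrix.one_mul]
      · rw [Matrix.mul_assoc, h, Matrix.mul_one]
      · rw [h, transpose_one]
      · rw [transpose_mul, transpose_transpose]
    subst hNdT
    have hNN : N * Nᵀ = 1 := h
    refine ⟨?_, ?_, ?_, ?_⟩
    · calc M * N * (Nᵀ * Md) * (M * N)
          = M * (N * Nᵀ) * (Md * M) * N := by simp only [Matrix.mul_assoc]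
        _ = M * Md * M * N := by rw [hNN, Matrix.mul_one]; simp only [Matrix.mul_assoc]
        _ = M * N := by rw [hM1]
    · calc Nᵀ * Md * (M * N) * (Nᵀ * Md)
          = Nᵀ * (Md * M) * (N * Nᵀ) * Md := by simp only [Matrix.mul_assoc]
        _ = Nᵀ * (Md * M * Md) := by rw [hNN, Matrix.mul_one]; simp only [Matrix.mul_assoc]
        _ = Nᵀ * Md := by rw [hM2]
    · have : M * N * (Nᵀ * Md) = M * ((N * Nᵀ) * Md) := by simp only [Matrix.mul_assoc]
      rw [this, hNN, Matrix.one_mul, hM3]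
    · have : Nᵀ * Md * (M * N) = Nᵀ * (Md * M) * N := by simp only [Matrix.mul_assoc]
      rw [this, transpose_mul, transpose_mul, transpose_transpose, hM4]
      simp only [Matrix.mul_assoc]
end

section
/- Let M be an m×n real matrix. Then M† = lim_{α → 0⁺} Mᵀ (α I_m + M Mᵀ)⁻¹, where for every α > 0 the matrix α I_m + M Mᵀ is invertible. -/
open Matrix

lemma psd_smul {k : ℕ} {A : Matrix (Fin k) (Fin k) ℝ} (hA : A.PosSemidef) {α : ℝ}
    (hα : 0 ≤ α) : (α • A).PosSemidef := by
  refine ⟨?_, fun x => ?_⟩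
  · unfold Matrix.IsHermitian
    rw [conjTranspose_smul, hA.1]
    simp
  · refine le_of_le_of_eq (mul_nonneg hα (hA.2 x)) ?_
    rw [Finsupp.mul_sum]
    refine Finsupp.sum_congr fun i _ => ?_
    rw [Finsupp.mul_sum]
    refine Finsupp.sum_congr fun j _ => ?_
    simp only [Matrix.smul_apply, smul_eq_mul]
    ring

/-- For every `α > 0` the matrix `α I_m + M Mᵀ` is invertible, and
`M† = lim_{α → 0⁺} Mᵀ (α I_m + M Mᵀ)⁻¹` (entrywise limit). -/
theorem stmt9 {m n : ℕ} (M : Matrix (Fin m) (Fin n) ℝ)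
    (Md : Matrix (Fin n) (Fin m) ℝ) (hMd : IsMoorePenrose M Md) :
    (∀ α : ℝ, 0 < α → IsUnit (α • (1 : Matrix (Fin m) (Fin m) ℝ) + M * Mᵀ).det) ∧
      Filter.Tendsto
        (fun α : ℝ => Mᵀ * (α • (1 : Matrix (Fin m) (Fin m) ℝ) + M * Mᵀ)⁻¹)
        (nhdsWithin 0 (Set.Ioi 0)) (nhds Md) := by
  obtain ⟨h1, h2, h3, h4⟩ := hMd
  have hpsd : (M * Mᵀ).PosSemidef := by
    have := Matrix.posSemidef_self_mul_conjTranspose M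
    rwa [Matrix.conjTranspose_eq_transpose_of_trivial] at this
  have hposdef : ∀ α : ℝ, 0 < α →
      (α • (1 : Matrix (Fin m) (Fin m) ℝ) + M * Mᵀ).PosDef := by
    intro α hα
    refine Matrix.PosDef.add_posSemidef ?_ hpsd
    rw [Matrix.smul_one_eq_diagonal]
    exact Matrix.PosDef.diagonal fun _ => hα
  have hunit : ∀ α : ℝ, 0 < α →
      IsUnit (α • (1 : Matrix (Fin m) (Fin m) ℝ) + M * Mᵀ).det :=
    fun α hα => ((hposdef α hα).det_pos).ne'.isUnit
  refine ⟨hunit, ?_⟩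
  -- key algebraic facts
  have hA : Md * (M * Mᵀ) = Mᵀ := by
    calc Md * (M * Mᵀ) = (Md * M) * Mᵀ := by rw [Matrix.mul_assoc]
      _ = (Md * M)ᵀ * Mᵀ := by rw [h4]
      _ = (M * (Md * M))ᵀ := (transpose_mul _ _).symm
      _ = Mᵀ := by rw [← Matrix.mul_assoc, h1]
  have hB : Md * Mdᵀ * Mᵀ = Md := by
    calc Md * Mdᵀ * Mᵀ = Md * (Mdᵀ * Mᵀ) := by rw [Matrix.mul_assoc]
      _ = Md * (M * Md)ᵀ := by rw [← transpose_mul]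
      _ = Md * (M * Md) := by rw [h3]
      _ = Md * M * Md := by rw [← Matrix.mul_assoc]
      _ = Md := h2
  set K : Matrix (Fin n) (Fin n) ℝ := Md * Mdᵀ with hK
  set N : Matrix (Fin n) (Fin m) ℝ := K * Md with hN
  have hKpsd : K.PosSemidef := by
    have := Matrix.posSemidef_self_mul_conjTranspose Md
    rwa [Matrix.conjTranspose_eq_transpose_of_trivial] at this
  have hTposdef : ∀ α : ℝ, 0 < α →
      ((1 : Matrix (Fin n) (Fin n) ℝ) + α • K).PosDef := by
    intro α hα
    exact Matrix.PosDef.add_posSemidef Matrix.PosDef.one (psd_smul hKpsd hα.le)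
  -- the key identity
  have key : ∀ α : ℝ, 0 < α →
      Mᵀ * (α • (1 : Matrix (Fin m) (Fin m) ℝ) + M * Mᵀ)⁻¹ =
        Md - α • (((1 : Matrix (Fin n) (Fin n) ℝ) + α • K)⁻¹ * N) := by
    intro α hα
    set S : Matrix (Fin m) (Fin m) ℝ := α • (1 : Matrix (Fin m) (Fin m) ℝ) + M * Mᵀ with hS
    set T : Matrix (Fin n) (Fin n) ℝ := (1 : Matrix (Fin n) (Fin n) ℝ) + α • K with hT
    have hSinv : S * S⁻¹ = 1 := Matrix.mul_nonsing_inv S (hunit α hα)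
    have hTinv : T⁻¹ * T = 1 :=
      Matrix.nonsing_inv_mul T ((hTposdef α hα).det_pos).ne'.isUnit
    have hMdS : Md * S = α • Md + Mᵀ := by
      rw [hS, Matrix.mul_add, Matrix.mul_smul, Matrix.mul_one, hA]
    have hMtS : Mᵀ * S⁻¹ = Md - α • (Md * S⁻¹) := by
      have h : (α • Md + Mᵀ) * S⁻¹ = Md * S * S⁻¹ := by rw [hMdS]
      rw [Matrix.mul_assoc, hSinv, Matrix.mul_one, Matrix.add_mul, Matrix.smul_mul] at h
      rw [eq_sub_of_add_eq' h]
    set X : Matrix (Fin n) (Fin m) ℝ := Md * S⁻¹ with hXdef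
    have hX : X = N - α • (K * X) := by
      calc X = (Md * Mdᵀ * Mᵀ) * S⁻¹ := by rw [hB]
        _ = K * (Mᵀ * S⁻¹) := by rw [← hK, Matrix.mul_assoc]
        _ = K * (Md - α • X) := by rw [hMtS]
        _ = N - α • (K * X) := by rw [Matrix.mul_sub, Matrix.mul_smul, hN]
    have hTX : T * X = N := by
      have h' : X + α • (K * X) = N := by
        nth_rewrite 1 [hX]
        abel
      rw [hT, Matrix.add_mul, Matrix.one_mul, Matrix.smul_mul]
      exact h'
    have hXeq : X = T⁻¹ * N := by rw [← hTX, ← Matrix.mul_assoc, hTinv, Matrix.one_mul]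
    rw [hMtS, hXeq]
  -- the limit
  have h1c : Continuous (fun α : ℝ => (1 : Matrix (Fin n) (Fin n) ℝ) + α • K) := by
    exact continuous_const.add (continuous_id.smul continuous_const)
  have hinvc : ContinuousAt (fun α : ℝ => ((1 : Matrix (Fin n) (Fin n) ℝ) + α • K)⁻¹) 0 := by
    have hc1 : ContinuousAt (fun α : ℝ => (1 : Matrix (Fin n) (Fin n) ℝ) + α • K) 0 :=
      h1c.continuousAt
    have h2' : ContinuousAt Inv.inv
        ((fun α : ℝ => (1 : Matrix (Fin n) (Fin n) ℝ) + α • K) 0) := by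
      simp only [zero_smul, add_zero]
      apply continuousAt_matrix_inv
      rw [Matrix.det_one]
      exact NormedRing.inverse_continuousAt (1 : ℝˣ)
    exact ContinuousAt.comp (g := Inv.inv)
      (f := fun α : ℝ => (1 : Matrix (Fin n) (Fin n) ℝ) + α • K) h2' hc1
  have hmulc : Continuous (fun A : Matrix (Fin n) (Fin n) ℝ => A * N) :=
    continuous_id.matrix_mul continuous_const
  have hfc : ContinuousAt
      (fun α : ℝ => Md - α • (((1 : Matrix (Fin n) (Fin n) ℝ) + α • K)⁻¹ * N)) 0 :=
    continuousAt_const.sub (continuousAt_id.smul (hmulc.continuousAt.comp hinvc))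
  have hlim : Filter.Tendsto
      (fun α : ℝ => Md - α • (((1 : Matrix (Fin n) (Fin n) ℝ) + α • K)⁻¹ * N))
      (nhdsWithin 0 (Set.Ioi 0)) (nhds Md) := by
    have := hfc.tendsto
    simp only [zero_smul, sub_zero] at this
    exact this.mono_left nhdsWithin_le_nhds
  refine Filter.Tendsto.congr' ?_ hlim
  filter_upwards [self_mem_nhdsWithin] with α hα
  exact (key α hα).symm
end

section
/- Let λ > 0 and x_1,...,x_T ∈ R^d, and set A_t = λ I_d + Σ_{s=1}^t x_s x_sᵀ. Then Σ_{t=1}^T x_tᵀ A_t⁻¹ x_t ≤ Σ_{k=1}^d log(1 + λ_k(G_T)/λ), where G_T = Σ_{t=1}^T x_t x_tᵀ and λ_k denotes the k-th largest eigenvalue. -/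
open Matrix

theorem aux_detlemma {d : ℕ} {A : Matrix (Fin d) (Fin d) ℝ} (hA : IsUnit A.det) (x : Fin d → ℝ) :
    (A + (-1 : ℝ) • vecMulVec x x).det = A.det * (1 - x ⬝ᵥ A⁻¹ *ᵥ x) := by
  have h : (-1 : ℝ) • vecMulVec x x = replicateCol Unit (-x) * replicateRow Unit x := by
    rw [← vecMulVec_eq Unit]; ext i j; simp [vecMulVec_apply]
  rw [h, det_add_replicateCol_mul_replicateRow hA]
  congr 1
  rw [det_unique]
  simp only [Matrix.add_apply, Matrix.one_apply_eq, Matrix.mul_apply, Matrix.replicateRow_apply,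
    Matrix.replicateCol_apply, dotProduct, mulVec, Finset.sum_mul, Finset.mul_sum, mul_neg, neg_mul,
    Pi.neg_apply, Finset.sum_neg_distrib, mul_assoc]
  rw [sub_eq_add_neg, Finset.sum_comm]

theorem aux_det_smul_one_add {d : ℕ} (lam : ℝ) {G : Matrix (Fin d) (Fin d) ℝ}
    (hG : G.IsHermitian) :
    (lam • 1 + G).det = ∏ k, (lam + hG.eigenvalues k) := by
  set U : Matrix (Fin d) (Fin d) ℝ := (hG.eigenvectorUnitary : Matrix (Fin d) (Fin d) ℝ) with hU
  have hUU : U * star U = 1 := (Matrix.mem_unitaryGroup_iff).mp hG.eigenvectorUnitary.2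
  have hUU' : star U * U = 1 := (Matrix.mem_unitaryGroup_iff').mp hG.eigenvectorUnitary.2
  have key : lam • 1 + G = U * (lam • 1 + diagonal (RCLike.ofReal ∘ hG.eigenvalues)) * star U := by
    have hs := hG.spectral_theorem
    rw [Unitary.conjStarAlgAut_apply, ← hU] at hs
    rw [Matrix.mul_add, Matrix.add_mul, ← hs]
    congr 1
    rw [Matrix.mul_smul, Matrix.mul_one, Matrix.smul_mul, hUU]
  rw [key, det_mul, det_mul, mul_comm, ← mul_assoc, ← det_mul, ← det_mul, hUU', Matrix.one_mul,
    smul_one_eq_diagonal, diagonal_add, det_diagonal]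
  simp [Function.comp]

/-- With `A_t = λ I_d + Σ_{s≤t} x_s x_sᵀ`, one has
`Σ_{t=1}^T x_tᵀ A_t⁻¹ x_t ≤ Σ_k log(1 + λ_k(G_T)/λ)`. -/
theorem stmt14 {d : ℕ} (T : ℕ) (lam : ℝ) (hlam : 0 < lam)
    (x : ℕ → (Fin d → ℝ)) (A : ℕ → Matrix (Fin d) (Fin d) ℝ)
    (hA : ∀ t, A t = lam • 1 + ∑ s ∈ Finset.Icc 1 t, Matrix.vecMulVec (x s) (x s))
    (hG : (∑ s ∈ Finset.Icc 1 T, Matrix.vecMulVec (x s) (x s)).IsHermitian) :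
    ∑ t ∈ Finset.Icc 1 T, x t ⬝ᵥ ((A t)⁻¹ *ᵥ x t) ≤
      ∑ k : Fin d, Real.log (1 + hG.eigenvalues k / lam) := by
  -- positivity facts
  have hvmv : ∀ s : ℕ, (vecMulVec (x s) (x s)).PosSemidef := by
    intro s
    rw [vecMulVec_eq (Fin 1)]
    convert Matrix.posSemidef_conjTranspose_mul_self (replicateRow (Fin 1) (x s)) using 1
    simp
    rfl
  have hPSD : ∀ t : ℕ, (∑ s ∈ Finset.Icc 1 t, Matrix.vecMulVec (x s) (x s)).PosSemidef := by
    intro t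
    exact Finset.sum_induction _ _ (fun a b ha hb => ha.add hb) Matrix.PosSemidef.zero
      (fun s _ => hvmv s)
  have hone : ((lam • 1 : Matrix (Fin d) (Fin d) ℝ)).PosDef := by
    rw [smul_one_eq_diagonal]
    exact Matrix.posDef_diagonal_iff.mpr fun _ => hlam
  have hApd : ∀ t : ℕ, (A t).PosDef := by
    intro t; rw [hA t]; exact hone.add_posSemidef (hPSD t)
  have hdetpos : ∀ t : ℕ, 0 < (A t).det := fun t => (hApd t).det_pos
  set f : ℕ → ℝ := fun n => Real.log ((A n).det) with hf
  -- per-step bound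
  have step : ∀ i : ℕ, x (i+1) ⬝ᵥ ((A (i+1))⁻¹ *ᵥ x (i+1)) ≤ f (i+1) - f i := by
    intro i
    have hsplit : A (i+1) = A i + vecMulVec (x (i+1)) (x (i+1)) := by
      rw [hA, hA, Finset.sum_Icc_succ_top (by omega : 1 ≤ i + 1), add_assoc]
    have hAi : A i = A (i+1) + (-1 : ℝ) • vecMulVec (x (i+1)) (x (i+1)) := by
      rw [hsplit]; ext a b; simp
    have hdl := aux_detlemma (IsUnit.mk0 _ (ne_of_gt (hdetpos (i+1)))) (x (i+1))
    rw [← hAi] at hdl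
    set q := x (i+1) ⬝ᵥ ((A (i+1))⁻¹ *ᵥ x (i+1)) with hq
    have hr : (A i).det / (A (i+1)).det = 1 - q := by
      rw [hdl]
      exact mul_div_cancel_left₀ _ (ne_of_gt (hdetpos (i+1)))
    have hlog := Real.log_le_sub_one_of_pos
      (div_pos (hdetpos i) (hdetpos (i+1)))
    rw [Real.log_div (ne_of_gt (hdetpos i)) (ne_of_gt (hdetpos (i+1))), hr] at hlog
    simp only [hf]
    linarith
  -- reindex and telescope
  have hreindex : ∑ t ∈ Finset.Icc 1 T, x t ⬝ᵥ ((A t)⁻¹ *ᵥ x t)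
      = ∑ i ∈ Finset.range T, x (i+1) ⬝ᵥ ((A (i+1))⁻¹ *ᵥ x (i+1)) := by
    apply Finset.sum_nbij' (fun t => t - 1) (fun i => i + 1) <;> intros <;>
      simp_all [Finset.mem_Icc, Finset.mem_range] <;> omega
  have htel : ∑ i ∈ Finset.range T, (f (i+1) - f i) = f T - f 0 := Finset.sum_range_sub f T
  have hbound : ∑ t ∈ Finset.Icc 1 T, x t ⬝ᵥ ((A t)⁻¹ *ᵥ x t) ≤ f T - f 0 := by
    rw [hreindex, ← htel]
    exact Finset.sum_le_sum fun i _ => step i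
  refine hbound.trans (le_of_eq ?_)
  -- compute f T
  have heig : ∀ k, 0 ≤ hG.eigenvalues k := fun k => (hPSD T).eigenvalues_nonneg k
  have hposk : ∀ k, 0 < lam + hG.eigenvalues k := fun k => by
    have := heig k; linarith
  have hfT : f T = ∑ k : Fin d, Real.log (lam + hG.eigenvalues k) := by
    simp only [hf]
    rw [hA T, aux_det_smul_one_add lam hG]
    rw [Real.log_prod fun k _ => ne_of_gt (hposk k)]
  have hf0 : f 0 = (d : ℝ) * Real.log lam := by
    simp only [hf]
    rw [hA 0]
    simp only [Finset.Icc_self, show Finset.Icc 1 0 = (∅ : Finset ℕ) by simp,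
      Finset.sum_empty, add_zero]
    rw [smul_one_eq_diagonal, det_diagonal, Finset.prod_const]
    simp [Real.log_pow]
  rw [hfT, hf0]
  have hk : ∀ k ∈ Finset.univ, Real.log (1 + hG.eigenvalues k / lam)
      = Real.log (lam + hG.eigenvalues k) - Real.log lam := by
    intro k _
    rw [← Real.log_div (ne_of_gt (hposk k)) (ne_of_gt hlam)]
    congr 1
    field_simp
  rw [Finset.sum_congr rfl hk, Finset.sum_sub_distrib, Finset.sum_const, Finset.card_univ,
    Fintype.card_fin, nsmul_eq_mul]
end

section
/- Let λ > 0, x_1,...,x_T ∈ R^d and y_1,...,y_T ∈ [-B,B]. Define û_1 = 0 and, for t ≥ 2, û_t = A_t⁻¹ b_{t-1} where A_t = λ I_d + Σ_{s=1}^t x_s x_sᵀ and b_{t-1} = Σ_{s=1}^{t-1} y_s x_s. Then for every u ∈ R^d, Σ_{t=1}^T (y_t - û_t·x_t)² - Σ_{t=1}^T (y_t - u·x_t)² ≤ λ‖u‖² + B² Σ_{k=1}^d log(1 + λ_k(G_T)/λ), where G_T = Σ_{t=1}^T x_t x_tᵀ. -/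
open Matrix

variable {d : ℕ}

lemma vmv_mulVec (x v : Fin d → ℝ) : vecMulVec x x *ᵥ v = (x ⬝ᵥ v) • x := by
  ext i
  simp [vecMulVec_apply, mulVec, dotProduct, Finset.mul_sum, mul_comm, mul_left_comm]

lemma psd_vmv (x : Fin d → ℝ) : (vecMulVec x x).PosSemidef := by
  apply PosSemidef.of_dotProduct_mulVec_nonneg
  · ext i j; simp [vecMulVec_apply, conjTranspose_apply, mul_comm]
  · intro v
    rw [vmv_mulVec]
    simpa [dotProduct_comm] using mul_self_nonneg (x ⬝ᵥ v)

lemma posDef_smul_one {lam : ℝ} (hlam : 0 < lam) : (lam • (1 : Matrix (Fin d) (Fin d) ℝ)).PosDef := by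
  rw [smul_one_eq_diagonal]
  exact posDef_diagonal_iff.mpr fun _ => hlam

lemma herm_dot_swap {M : Matrix (Fin d) (Fin d) ℝ} (hM : M.IsHermitian) (a c : Fin d → ℝ) :
    a ⬝ᵥ (M *ᵥ c) = c ⬝ᵥ (M *ᵥ a) := by
  rw [dotProduct_mulVec, ← mulVec_transpose, show Mᵀ = M from hM, dotProduct_comm]

lemma quad_lb {A : Matrix (Fin d) (Fin d) ℝ} (hA : A.PosDef) (bb v : Fin d → ℝ) :
    2 * (bb ⬝ᵥ v) - v ⬝ᵥ (A *ᵥ v) ≤ bb ⬝ᵥ (A⁻¹ *ᵥ bb) := by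
  set w := A⁻¹ *ᵥ bb with hw
  have hAw : A *ᵥ w = bb := by
    rw [hw, mulVec_mulVec, mul_nonsing_inv _ hA.det_pos.ne'.isUnit, one_mulVec]
  have h0 : 0 ≤ (v - w) ⬝ᵥ (A *ᵥ (v - w)) := by
    simpa using hA.posSemidef.dotProduct_mulVec_nonneg (v - w)
  have e1 : v ⬝ᵥ (A *ᵥ w) = bb ⬝ᵥ v := by rw [hAw, dotProduct_comm]
  have e2 : w ⬝ᵥ (A *ᵥ v) = bb ⬝ᵥ v := by rw [herm_dot_swap hA.isHermitian, hAw, dotProduct_comm]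
  have e3 : w ⬝ᵥ (A *ᵥ w) = bb ⬝ᵥ (A⁻¹ *ᵥ bb) := by rw [hAw, dotProduct_comm, hw]
  have hx : (v - w) ⬝ᵥ (A *ᵥ (v - w)) =
      v ⬝ᵥ (A *ᵥ v) - v ⬝ᵥ (A *ᵥ w) - w ⬝ᵥ (A *ᵥ v) + w ⬝ᵥ (A *ᵥ w) := by
    rw [mulVec_sub, sub_dotProduct, dotProduct_sub, dotProduct_sub]
    ring
  rw [hx, e1, e2, e3] at h0
  linarith

lemma step_ineq {Ap A : Matrix (Fin d) (Fin d) ℝ} (hAp : Ap.PosDef)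
    {x bb : Fin d → ℝ} {yt B : ℝ} (hA : A = Ap + vecMulVec x x) (hy : |yt| ≤ B) :
    (yt - (A⁻¹ *ᵥ bb) ⬝ᵥ x) ^ 2 + (bb + yt • x) ⬝ᵥ (A⁻¹ *ᵥ (bb + yt • x))
      - bb ⬝ᵥ (Ap⁻¹ *ᵥ bb) - yt ^ 2 ≤ B ^ 2 * (x ⬝ᵥ (A⁻¹ *ᵥ x)) := by
  have hApd : A.PosDef := hA ▸ hAp.add_posSemidef (psd_vmv x)
  have hAinv : A⁻¹.PosDef := hApd.inv
  have hAih : A⁻¹.IsHermitian := hApd.isHermitian.inv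
  set w := A⁻¹ *ᵥ bb with hw
  set yh := x ⬝ᵥ w with hyh
  have hAw : A *ᵥ w = bb := by
    rw [hw, mulVec_mulVec, mul_nonsing_inv _ hApd.det_pos.ne'.isUnit, one_mulVec]
  -- b^T Ap⁻¹ b ≥ b^T A⁻¹ b + yh²
  have key : bb ⬝ᵥ (A⁻¹ *ᵥ bb) + yh ^ 2 ≤ bb ⬝ᵥ (Ap⁻¹ *ᵥ bb) := by
    have h1 := quad_lb hAp bb w
    have h2 : w ⬝ᵥ (Ap *ᵥ w) = bb ⬝ᵥ w - yh ^ 2 := by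
      have : Ap *ᵥ w = A *ᵥ w - (x ⬝ᵥ w) • x := by
        rw [hA, add_mulVec, vmv_mulVec]; ring_nf
      rw [this, hAw, dotProduct_sub, dotProduct_smul, dotProduct_comm bb w, ← hyh,
        dotProduct_comm w x, ← hyh]
      simp [smul_eq_mul, sq]
    have h3 : bb ⬝ᵥ w = bb ⬝ᵥ (A⁻¹ *ᵥ bb) := by rw [hw]
    rw [h2, h3] at h1
    linarith [h1]
  -- expansion of the quadratic in (bb + yt • x)
  have swap : bb ⬝ᵥ (A⁻¹ *ᵥ x) = x ⬝ᵥ (A⁻¹ *ᵥ bb) := herm_dot_swap hAih bb x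
  have expand : (bb + yt • x) ⬝ᵥ (A⁻¹ *ᵥ (bb + yt • x)) =
      bb ⬝ᵥ (A⁻¹ *ᵥ bb) + 2 * yt * yh + yt ^ 2 * (x ⬝ᵥ (A⁻¹ *ᵥ x)) := by
    rw [mulVec_add, add_dotProduct, dotProduct_add, dotProduct_add, mulVec_smul,
      dotProduct_smul, dotProduct_smul, smul_dotProduct, smul_dotProduct, swap]
    simp only [smul_eq_mul, hyh, hw, dotProduct_comm x w]
    ring
  have hs : 0 ≤ x ⬝ᵥ (A⁻¹ *ᵥ x) := by simpa using hAinv.posSemidef.dotProduct_mulVec_nonneg x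
  have hyB : yt ^ 2 ≤ B ^ 2 := sq_le_sq' (neg_le_of_abs_le hy) (le_of_abs_le hy)
  have hpred : (A⁻¹ *ᵥ bb) ⬝ᵥ x = yh := by rw [hyh, dotProduct_comm, hw]
  rw [expand, hpred]
  nlinarith [key, mul_le_mul_of_nonneg_right hyB hs]

lemma det_step {Ap A : Matrix (Fin d) (Fin d) ℝ} (hAp : Ap.PosDef)
    {x : Fin d → ℝ} (hA : A = Ap + vecMulVec x x) :
    x ⬝ᵥ (A⁻¹ *ᵥ x) ≤ Real.log A.det - Real.log Ap.det := by
  have hApd : A.PosDef := hA ▸ hAp.add_posSemidef (psd_vmv x)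
  set r := x ⬝ᵥ (Ap⁻¹ *ᵥ x) with hr
  set s := x ⬝ᵥ (A⁻¹ *ᵥ x) with hs
  have hr0 : 0 ≤ r := by simpa using hAp.inv.posSemidef.dotProduct_mulVec_nonneg x
  have hdet : A.det = Ap.det * (1 + r) := by
    rw [hA, vecMulVec_eq Unit, det_add_replicateCol_mul_replicateRow hAp.det_pos.ne'.isUnit]
    congr 1
    rw [det_unique, Matrix.mul_assoc, ← replicateCol_mulVec]
    simp [Matrix.add_apply, hr]
  -- s * (1 + r) = r
  have hw : Ap *ᵥ (A⁻¹ *ᵥ x) = (1 - s) • x := by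
    have h1 : A *ᵥ (A⁻¹ *ᵥ x) = x := by
      rw [mulVec_mulVec, mul_nonsing_inv _ hApd.det_pos.ne'.isUnit, one_mulVec]
    have h2 : A *ᵥ (A⁻¹ *ᵥ x) = Ap *ᵥ (A⁻¹ *ᵥ x) + s • x := by
      nth_rewrite 1 [hA]
      rw [add_mulVec, vmv_mulVec]
    rw [h2] at h1
    rw [eq_sub_of_add_eq h1, sub_smul, one_smul]
  have hwe : A⁻¹ *ᵥ x = (1 - s) • (Ap⁻¹ *ᵥ x) := by
    have h := congrArg (fun v => Ap⁻¹ *ᵥ v) hw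
    simp only [mulVec_smul, mulVec_mulVec, ← Matrix.mul_assoc,
      nonsing_inv_mul _ hAp.det_pos.ne'.isUnit, Matrix.one_mul, one_mulVec] at h
    exact h
  have hsr : s = (1 - s) * r := by
    conv_lhs => rw [hs, hwe, dotProduct_smul]
    rw [smul_eq_mul]
  have h1r : (0:ℝ) < 1 + r := by linarith
  have hs_eq : s = 1 - 1 / (1 + r) := by
    field_simp
    linarith [hsr]
  have hlog : 1 - 1 / (1 + r) ≤ Real.log (1 + r) := by
    have := Real.log_le_sub_one_of_pos (x := 1 / (1 + r)) (by positivity)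
    rw [Real.log_div one_ne_zero h1r.ne', Real.log_one] at this
    linarith
  have hfin : Real.log A.det - Real.log Ap.det = Real.log (1 + r) := by
    rw [hdet, Real.log_mul hAp.det_pos.ne' h1r.ne']
    ring
  rw [hfin, hs_eq]
  exact hlog

lemma det_shift {G : Matrix (Fin d) (Fin d) ℝ} (hG : G.IsHermitian) (lam : ℝ) :
    (lam • (1:Matrix (Fin d) (Fin d) ℝ) + G).det = ∏ k, (lam + hG.eigenvalues k) := by
  have hU : star (hG.eigenvectorUnitary : Matrix (Fin d) (Fin d) ℝ) * G * (hG.eigenvectorUnitary : Matrix (Fin d) (Fin d) ℝ) = diagonal (RCLike.ofReal ∘ hG.eigenvalues) := by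
    have := hG.conjStarAlgAut_star_eigenvectorUnitary
    rwa [Unitary.conjStarAlgAut_apply, Unitary.coe_star, star_star] at this
  set U := (hG.eigenvectorUnitary : Matrix (Fin d) (Fin d) ℝ) with hUdef
  have hUU : star U * U = 1 := by
    exact Matrix.mem_unitaryGroup_iff'.mp hG.eigenvectorUnitary.2
  have key : star U * (lam • 1 + G) * U = diagonal (fun k => lam + hG.eigenvalues k) := by
    rw [Matrix.mul_add, Matrix.add_mul, hU]
    have h1 : star U * (lam • (1:Matrix (Fin d) (Fin d) ℝ)) * U = lam • (1:Matrix (Fin d) (Fin d) ℝ) := by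
      rw [Matrix.mul_smul, Matrix.smul_mul, Matrix.mul_one, hUU]
    rw [h1]
    have : (RCLike.ofReal ∘ hG.eigenvalues : Fin d → ℝ) = hG.eigenvalues := by
      ext k; simp
    rw [this, smul_one_eq_diagonal, diagonal_add]
  have hdet := congrArg det key
  rw [det_mul, det_mul, det_diagonal] at hdet
  have h1 : det (star U) * det U = 1 := by rw [← det_mul, hUU, det_one]
  have h2 : (lam • (1:Matrix (Fin d) (Fin d) ℝ) + G).det * (det (star U) * det U)
      = ∏ k, (lam + hG.eigenvalues k) := by rw [← hdet]; ring
  rw [h1, mul_one] at h2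
  exact h2

lemma sum_mulVec' {F : Finset ℕ} (M : ℕ → Matrix (Fin d) (Fin d) ℝ) (v : Fin d → ℝ) :
    (∑ i ∈ F, M i) *ᵥ v = ∑ i ∈ F, M i *ᵥ v := by
  classical
  induction F using Finset.induction with
  | empty => simp
  | insert _ _ h ih => simp [Finset.sum_insert h, add_mulVec, ih]

lemma dotProduct_sum' {F : Finset ℕ} (v : Fin d → ℝ) (w : ℕ → Fin d → ℝ) :
    v ⬝ᵥ (∑ i ∈ F, w i) = ∑ i ∈ F, v ⬝ᵥ w i := by
  classical
  induction F using Finset.induction with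
  | empty => simp
  | insert _ _ h ih => simp [Finset.sum_insert h, dotProduct_add, ih]

lemma sum_dotProduct' {F : Finset ℕ} (v : Fin d → ℝ) (w : ℕ → Fin d → ℝ) :
    (∑ i ∈ F, w i) ⬝ᵥ v = ∑ i ∈ F, w i ⬝ᵥ v := by
  classical
  induction F using Finset.induction with
  | empty => simp
  | insert _ _ h ih => simp [Finset.sum_insert h, add_dotProduct, ih]



/-- Regret bound for the Vovk–Azoury–Warmuth non-linear ridge regression
forecaster: for every comparison vector `u`,
`Σ_t (y_t - û_t·x_t)² - Σ_t (y_t - u·x_t)² ≤ λ‖u‖² + B² Σ_k log(1 + λ_k(G_T)/λ)`. -/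
theorem stmt16 {d : ℕ} (T : ℕ) (lam B : ℝ) (hlam : 0 < lam)
    (x : ℕ → (Fin d → ℝ)) (y : ℕ → ℝ) (hy : ∀ t ∈ Finset.Icc 1 T, |y t| ≤ B)
    (A : ℕ → Matrix (Fin d) (Fin d) ℝ)
    (hA : ∀ t, A t = lam • 1 + ∑ s ∈ Finset.Icc 1 t, Matrix.vecMulVec (x s) (x s))
    (b : ℕ → Fin d → ℝ) (hb : ∀ t, b t = ∑ s ∈ Finset.Icc 1 t, y s • x s)
    (uhat : ℕ → Fin d → ℝ) (hu : ∀ t, uhat t = (A t)⁻¹ *ᵥ b (t - 1))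
    (hG : (∑ s ∈ Finset.Icc 1 T, Matrix.vecMulVec (x s) (x s)).IsHermitian)
    (u : Fin d → ℝ) :
    ∑ t ∈ Finset.Icc 1 T, (y t - uhat t ⬝ᵥ x t) ^ 2 -
        ∑ t ∈ Finset.Icc 1 T, (y t - u ⬝ᵥ x t) ^ 2 ≤
      lam * ∑ i, u i ^ 2 +
        B ^ 2 * ∑ k : Fin d, Real.log (1 + hG.eigenvalues k / lam) := by
  have hSpsd : ∀ (t : ℕ), (∑ s ∈ Finset.Icc 1 t, vecMulVec (x s) (x s)).PosSemidef := by
    intro t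
    exact Finset.sum_induction _ _ (fun a b ha hb => ha.add hb) Matrix.PosSemidef.zero
      (fun s _ => psd_vmv (x s))
  have hApos : ∀ t, (A t).PosDef := by
    intro t
    rw [hA t]
    exact (posDef_smul_one hlam).add_posSemidef (hSpsd t)
  have hArec : ∀ n : ℕ, A (n + 1) = A n + vecMulVec (x (n + 1)) (x (n + 1)) := by
    intro n
    rw [hA, hA, Finset.sum_Icc_succ_top (Nat.le_add_left 1 n), add_assoc]
  have hbrec : ∀ n : ℕ, b (n + 1) = b n + y (n + 1) • x (n + 1) := by
    intro n
    rw [hb, hb, Finset.sum_Icc_succ_top (Nat.le_add_left 1 n)]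
  -- Claim 1 : forecaster loss bound
  have claim1 : ∀ n, n ≤ T →
      (∑ t ∈ Finset.Icc 1 n, (y t - uhat t ⬝ᵥ x t) ^ 2) + b n ⬝ᵥ ((A n)⁻¹ *ᵥ b n)
        - (∑ t ∈ Finset.Icc 1 n, (y t) ^ 2)
        ≤ B ^ 2 * ∑ t ∈ Finset.Icc 1 n, x t ⬝ᵥ ((A t)⁻¹ *ᵥ x t) := by
    intro n hn
    induction n with
    | zero => simp [hb 0]
    | succ m ih =>
      have ih' := ih (Nat.le_of_succ_le hn)
      have hstep := step_ineq (hApos m) (hArec m) (hy (m + 1) (Finset.mem_Icc.mpr ⟨Nat.le_add_left 1 m, hn⟩))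
        (bb := b m) (yt := y (m + 1))
      rw [Finset.sum_Icc_succ_top (Nat.le_add_left 1 m),
        Finset.sum_Icc_succ_top (Nat.le_add_left 1 m) (f := fun t => (y t) ^ 2),
        Finset.sum_Icc_succ_top (Nat.le_add_left 1 m) (f := fun t => x t ⬝ᵥ ((A t)⁻¹ *ᵥ x t)),
        hbrec m, hu (m + 1)]
      simp only [Nat.add_sub_cancel]
      rw [mul_add]
      linarith [hstep]
  -- Claim 2 : log-det bound on the sum of quadratic forms
  have claim2 : ∀ n : ℕ,
      ∑ t ∈ Finset.Icc 1 n, x t ⬝ᵥ ((A t)⁻¹ *ᵥ x t)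
        ≤ Real.log (A n).det - Real.log (A 0).det := by
    intro n
    induction n with
    | zero => simp
    | succ m ih =>
      rw [Finset.sum_Icc_succ_top (Nat.le_add_left 1 m)]
      have := det_step (hApos m) (hArec m)
      linarith
  -- Claim 3 : eigenvalue identity
  have hev : ∀ k, 0 ≤ hG.eigenvalues k := fun k => (hSpsd T).eigenvalues_nonneg k
  have hdT : (A T).det = ∏ k, (lam + hG.eigenvalues k) := by
    rw [hA T]; exact det_shift hG lam
  have hd0 : (A 0).det = lam ^ d := by
    rw [hA 0]; simp [det_smul]
  have claim3 : Real.log (A T).det - Real.log (A 0).det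
      = ∑ k : Fin d, Real.log (1 + hG.eigenvalues k / lam) := by
    have hterm : ∀ k : Fin d, Real.log (1 + hG.eigenvalues k / lam)
        = Real.log (lam + hG.eigenvalues k) - Real.log lam := by
      intro k
      rw [show (1:ℝ) + hG.eigenvalues k / lam = (lam + hG.eigenvalues k) / lam by
        field_simp]
      exact Real.log_div (add_pos_of_pos_of_nonneg hlam (hev k)).ne' hlam.ne'
    rw [hdT, hd0, Real.log_prod (fun k _ => (add_pos_of_pos_of_nonneg hlam (hev k)).ne'), Real.log_pow]
    simp only [hterm]
    rw [Finset.sum_sub_distrib, Finset.sum_const, Finset.card_univ, Fintype.card_fin,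
      nsmul_eq_mul]
  -- Claim 4 : comparator bound
  have hATu : u ⬝ᵥ (A T *ᵥ u)
      = lam * (∑ i, u i ^ 2) + ∑ t ∈ Finset.Icc 1 T, (x t ⬝ᵥ u) ^ 2 := by
    rw [hA T, add_mulVec, dotProduct_add, smul_mulVec, one_mulVec, dotProduct_smul,
      sum_mulVec', dotProduct_sum']
    congr 1
    · rw [smul_eq_mul]
      congr 1
      simp [dotProduct, sq]
    · apply Finset.sum_congr rfl
      intro t _
      rw [vmv_mulVec, dotProduct_smul, smul_eq_mul, dotProduct_comm u (x t), sq]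
  have hbTu : b T ⬝ᵥ u = ∑ t ∈ Finset.Icc 1 T, y t * (x t ⬝ᵥ u) := by
    rw [hb, sum_dotProduct']
    exact Finset.sum_congr rfl fun t _ => by rw [smul_dotProduct, smul_eq_mul]
  have hsq : ∑ t ∈ Finset.Icc 1 T, (y t - u ⬝ᵥ x t) ^ 2
      = (∑ t ∈ Finset.Icc 1 T, (y t) ^ 2) - 2 * (b T ⬝ᵥ u)
        + ∑ t ∈ Finset.Icc 1 T, (x t ⬝ᵥ u) ^ 2 := by
    rw [hbTu, Finset.mul_sum, ← Finset.sum_sub_distrib, ← Finset.sum_add_distrib]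
    apply Finset.sum_congr rfl
    intro t _
    rw [dotProduct_comm u (x t)]
    ring
  have hquad := quad_lb (hApos T) (b T) u
  have h1 := claim1 T le_rfl
  have h2 : B ^ 2 * ∑ t ∈ Finset.Icc 1 T, x t ⬝ᵥ ((A t)⁻¹ *ᵥ x t)
      ≤ B ^ 2 * (Real.log (A T).det - Real.log (A 0).det) :=
    mul_le_mul_of_nonneg_left (claim2 T) (sq_nonneg B)
  rw [claim3] at h2
  rw [hbTu] at hquad hsq
  linarith [h1, h2, hquad, hATu, hsq]
end

section
/- Let λ > 0, x_1,...,x_T ∈ R^d, y_1,...,y_T ∈ R, A_t = λ I_d + Σ_{s=1}^t x_s x_sᵀ, b_t = Σ_{s=1}^t y_s x_s, û_t = A_t⁻¹ b_{t-1} and ŭ_t = A_{t-1}⁻¹ b_{t-1}. Denote L_t(u) = Σ_{s=1}^t (y_s - u·x_s)² + λ‖u‖². Then for each t, (y_t - û_t·x_t)² + L_{t-1}(ŭ_t) - L_t(ŭ_{t+1}) = (ŭ_{t+1} - û_t)ᵀ A_t (ŭ_{t+1} - û_t) - (û_t - ŭ_t)ᵀ A_{t-1} (û_t - ŭ_t).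 -/
open Matrix

section Aux

variable {d : ℕ}

lemma dot_vmv (w v u : Fin d → ℝ) :
    u ⬝ᵥ (vecMulVec w v *ᵥ u) = (u ⬝ᵥ w) * (v ⬝ᵥ u) := by
  simp only [dotProduct, vecMulVec_apply, mulVec, Finset.mul_sum, Finset.sum_mul]
  rw [Finset.sum_comm]
  congr 1; ext i; congr 1; ext j; ring

lemma dot_sum_mulVec (s : Finset ℕ) (M : ℕ → Matrix (Fin d) (Fin d) ℝ) (u : Fin d → ℝ) :
    u ⬝ᵥ ((∑ i ∈ s, M i) *ᵥ u) = ∑ i ∈ s, u ⬝ᵥ (M i *ᵥ u) := by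
  induction s using Finset.induction with
  | empty => simp
  | insert _ _ h ih => simp [Finset.sum_insert h, add_mulVec, dotProduct_add, ih]

lemma dot_A (lam : ℝ) (x : ℕ → (Fin d → ℝ)) (T : ℕ) (u : Fin d → ℝ) :
    u ⬝ᵥ ((lam • 1 + ∑ s ∈ Finset.Icc 1 T, Matrix.vecMulVec (x s) (x s)) *ᵥ u)
      = lam * (u ⬝ᵥ u) + ∑ s ∈ Finset.Icc 1 T, (u ⬝ᵥ x s) ^ 2 := by
  rw [add_mulVec, dotProduct_add, dot_sum_mulVec]
  congr 1
  · rw [smul_mulVec, one_mulVec, dotProduct_smul, smul_eq_mul]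
  · refine Finset.sum_congr rfl fun s _ => ?_
    rw [dot_vmv, dotProduct_comm (x s) u, sq]

lemma quad_exp (M : Matrix (Fin d) (Fin d) ℝ) (hsym : Mᵀ = M)
    (u v w : Fin d → ℝ) (hv : M *ᵥ v = w) :
    (u ⬝ᵥ (M *ᵥ u) - 2 * (u ⬝ᵥ w)) - (v ⬝ᵥ (M *ᵥ v) - 2 * (v ⬝ᵥ w)) =
      (u - v) ⬝ᵥ (M *ᵥ (u - v)) := by
  have hs : ∀ a c : Fin d → ℝ, c ⬝ᵥ (M *ᵥ a) = a ⬝ᵥ (M *ᵥ c) := by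
    intro a c
    rw [dotProduct_mulVec, ← mulVec_transpose, hsym, dotProduct_comm]
  rw [mulVec_sub, dotProduct_sub, sub_dotProduct, sub_dotProduct, ← hv,
    hs v u]
  ring

lemma neg_quad (M : Matrix (Fin d) (Fin d) ℝ) (u v : Fin d → ℝ) :
    (u - v) ⬝ᵥ (M *ᵥ (u - v)) = (v - u) ⬝ᵥ (M *ᵥ (v - u)) := by
  have : v - u = -(u - v) := by ring
  rw [this, mulVec_neg, neg_dotProduct, dotProduct_neg, neg_neg]

end Aux

/-- Exact algebraic identity in the analysis of the Vovk–Azoury–Warmuth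
forecaster: with `û_t = A_t⁻¹ b_{t-1}`, `ŭ_t = A_{t-1}⁻¹ b_{t-1}` and
`L_t(u) = Σ_{s≤t} (y_s - u·x_s)² + λ‖u‖²`, one has
`(y_t - û_t·x_t)² + L_{t-1}(ŭ_t) - L_t(ŭ_{t+1})
  = (ŭ_{t+1} - û_t)ᵀ A_t (ŭ_{t+1} - û_t) - (û_t - ŭ_t)ᵀ A_{t-1} (û_t - ŭ_t)`. -/
theorem stmt17 {d : ℕ} (lam : ℝ) (hlam : 0 < lam)
    (x : ℕ → (Fin d → ℝ)) (y : ℕ → ℝ)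
    (A : ℕ → Matrix (Fin d) (Fin d) ℝ)
    (hA : ∀ t, A t = lam • 1 + ∑ s ∈ Finset.Icc 1 t, Matrix.vecMulVec (x s) (x s))
    (b : ℕ → Fin d → ℝ) (hb : ∀ t, b t = ∑ s ∈ Finset.Icc 1 t, y s • x s)
    (uhat ubrev : ℕ → Fin d → ℝ)
    (huhat : ∀ t, uhat t = (A t)⁻¹ *ᵥ b (t - 1))
    (hubrev : ∀ t, ubrev t = (A (t - 1))⁻¹ *ᵥ b (t - 1))
    (L : ℕ → (Fin d → ℝ) → ℝ)
    (hL : ∀ t u, L t u = (∑ s ∈ Finset.Icc 1 t, (y s - u ⬝ᵥ x s) ^ 2) + lam * ∑ i, u i ^ 2)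
    (t : ℕ) (ht : 1 ≤ t) :
    (y t - uhat t ⬝ᵥ x t) ^ 2 + L (t - 1) (ubrev t) - L t (ubrev (t + 1)) =
      (ubrev (t + 1) - uhat t) ⬝ᵥ (A t *ᵥ (ubrev (t + 1) - uhat t)) -
        (uhat t - ubrev t) ⬝ᵥ (A (t - 1) *ᵥ (uhat t - ubrev t)) := by
  -- symmetry of A
  have hsym : ∀ T, (A T)ᵀ = A T := by
    intro T
    rw [hA T, transpose_add, transpose_smul, transpose_one, transpose_sum]
    congr 1
    refine Finset.sum_congr rfl fun s _ => ?_
    ext i j; simp [vecMulVec_apply, transpose_apply, mul_comm]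
  -- positive definiteness of A
  have hpd : ∀ T, (A T).PosDef := by
    intro T
    refine Matrix.PosDef.of_dotProduct_mulVec_pos ?_ ?_
    · exact (hsym T)
    · intro u hu
      have h1 : star u = u := rfl
      rw [h1, hA, dot_A]
      have hsq : u ⬝ᵥ u = ∑ i, u i ^ 2 := by simp [dotProduct, sq]
      have h2 : 0 < u ⬝ᵥ u := by
        rcases lt_or_eq_of_le (by rw [hsq]; positivity : (0:ℝ) ≤ u ⬝ᵥ u) with h | h
        · exact h
        · exact absurd (dotProduct_self_eq_zero.mp h.symm) hu
      have h3 : (0:ℝ) ≤ ∑ s ∈ Finset.Icc 1 T, (u ⬝ᵥ x s) ^ 2 := by positivity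
      nlinarith
  -- A T *ᵥ ((A T)⁻¹ *ᵥ w) = w
  have hinv : ∀ T (w : Fin d → ℝ), A T *ᵥ ((A T)⁻¹ *ᵥ w) = w := by
    intro T w
    rw [mulVec_mulVec, Matrix.mul_nonsing_inv _ ((hpd T).det_pos.ne').isUnit, one_mulVec]
  -- quadratic form of the loss
  have hLq : ∀ T u, L T u =
      (∑ s ∈ Finset.Icc 1 T, (y s) ^ 2) - 2 * (u ⬝ᵥ b T) + u ⬝ᵥ (A T *ᵥ u) := by
    intro T u
    rw [hL, hA, dot_A, hb]
    have hub : u ⬝ᵥ ∑ s ∈ Finset.Icc 1 T, y s • x s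
        = ∑ s ∈ Finset.Icc 1 T, y s * (u ⬝ᵥ x s) := by
      induction (Finset.Icc 1 T) using Finset.induction with
      | empty => simp
      | insert _ _ h ih => simp [Finset.sum_insert h, dotProduct_add, ih, mul_comm]
    rw [hub]
    have huu : u ⬝ᵥ u = ∑ i, u i ^ 2 := by simp [dotProduct, sq]
    rw [huu, Finset.mul_sum, Finset.mul_sum]
    have : ∀ s ∈ Finset.Icc 1 T, (y s - u ⬝ᵥ x s) ^ 2
        = y s ^ 2 - 2 * (y s * (u ⬝ᵥ x s)) + (u ⬝ᵥ x s) ^ 2 := fun s _ => by ring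
    rw [Finset.sum_congr rfl this, Finset.sum_add_distrib, Finset.sum_sub_distrib,
      ← Finset.mul_sum]
    ring
  obtain ⟨k, rfl⟩ : ∃ k, t = k + 1 := ⟨t - 1, (Nat.succ_pred_eq_of_pos ht).symm⟩
  have hk1 : k + 1 - 1 = k := rfl
  set u := uhat (k + 1) with hu
  set v1 := ubrev (k + 1) with hv1
  set v2 := ubrev (k + 1 + 1) with hv2
  have hAv1 : A k *ᵥ v1 = b k := by rw [hv1, hubrev, hk1]; exact hinv k _
  have hAv2 : A (k + 1) *ᵥ v2 = b (k + 1) := by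
    rw [hv2, hubrev]; simp only [Nat.add_sub_cancel]; exact hinv (k + 1) _
  have hAu : A (k + 1) *ᵥ u = b k := by rw [hu, huhat, hk1]; exact hinv (k + 1) _
  -- E1 : L k u - L k v1
  have E1 : L k u - L k v1 = (u - v1) ⬝ᵥ (A k *ᵥ (u - v1)) := by
    rw [hLq k u, hLq k v1, ← quad_exp (A k) (hsym k) u v1 (b k) hAv1]
    ring
  have E2 : L (k + 1) u - L (k + 1) v2 = (u - v2) ⬝ᵥ (A (k + 1) *ᵥ (u - v2)) := by
    rw [hLq (k + 1) u, hLq (k + 1) v2,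
      ← quad_exp (A (k + 1)) (hsym (k + 1)) u v2 (b (k + 1)) hAv2]
    ring
  -- E3 : L (k+1) u = L k u + (y (k+1) - u ⬝ᵥ x (k+1))^2
  have E3 : L (k + 1) u = L k u + (y (k + 1) - u ⬝ᵥ x (k + 1)) ^ 2 := by
    rw [hL, hL, Finset.sum_Icc_succ_top (Nat.le_add_left 1 k)]
    ring
  rw [hk1, neg_quad (A (k + 1)) v2 u]
  linarith [E1, E2, E3]
end
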